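/- Let T : C(X) → C(X) be fully order preserving with induced map y : X* → X* on linear parts of affine functions. Then y is a bijection, and for each x ∈ X both u ↦ ⟨y(u), x⟩ and u ↦ ⟨y⁻¹(u), x⟩ are quasiconvex functions on X*. -/

import Mathlib

open Set

noncomputable section

variable {X : Type*}

/-- The class of proper, lower semicontinuous, convex functions `X → ℝ ∪ {+∞}`,
encoded as `EReal`-valued functions never taking the value `⊥`. -/
def IsClFun (X : Type*) [NormedAddCommGroup X] [NormedSpace ℝ X] (f : X → EReal) : Prop :=
  (∀ x, f x ≠ ⊥) ∧ (∃ x, f x ≠ ⊤) ∧ LowerSemicontinuous f ∧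
  ∀ x y : X, ∀ a b : ℝ, 0 ≤ a → 0 ≤ b → a + b = 1 →
    f (a • x + b • y) ≤ (a : EReal) * f x + (b : EReal) * f y

/-- `C(X)`, as a subtype. -/
abbrev Cl (X : Type*) [NormedAddCommGroup X] [NormedSpace ℝ X] :=
  {f : X → EReal // IsClFun X f}

/-- The continuous affine function `h_{u,α}(x) = ⟨u,x⟩ + α`. -/
def aff [NormedAddCommGroup X] [NormedSpace ℝ X] (u : X →L[ℝ] ℝ) (α : ℝ) : X → EReal :=
  fun x => ((u x + α : ℝ) : EReal)

theorem affMem [NormedAddCommGroup X] [NormedSpace ℝ X] (u : X →L[ℝ] ℝ) (α : ℝ) :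
    IsClFun X (aff u α) := by
  refine ⟨fun x => EReal.coe_ne_bot _, ⟨0, EReal.coe_ne_top _⟩, ?_, ?_⟩
  · exact (continuous_coe_real_ereal.comp (by continuity)).lowerSemicontinuous
  · intro x y a b ha hb hab
    simp only [aff, map_add, map_smul, smul_eq_mul]
    rw [← EReal.coe_mul, ← EReal.coe_mul, ← EReal.coe_add, EReal.coe_le_coe_iff]
    have h : a * α + b * α = α := by rw [← add_mul, hab, one_mul]
    nlinarith

/-- `h_{u,α}` as an element of `C(X)`. -/
def affCl [NormedAddCommGroup X] [NormedSpace ℝ X] (u : X →L[ℝ] ℝ) (α : ℝ) : Cl X :=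
  ⟨aff u α, affMem u α⟩

/-- An operator on `C(X)` is fully order preserving if it is onto and
`f ≤ g ↔ T f ≤ T g` (pointwise order). -/
def FullyOrderPreserving [NormedAddCommGroup X] [NormedSpace ℝ X]
    (T : Cl X → Cl X) : Prop :=
  Function.Surjective T ∧ ∀ f g : Cl X, f.1 ≤ g.1 ↔ (T f).1 ≤ (T g).1


/-- A real-valued function on the dual is quasiconvex. -/
def QCvx [NormedAddCommGroup X] [NormedSpace ℝ X] (φ : (X →L[ℝ] ℝ) → ℝ) : Prop :=
  ∀ u v : X →L[ℝ] ℝ, ∀ s : ℝ, 0 ≤ s → s ≤ 1 →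
    φ (s • u + (1 - s) • v) ≤ max (φ u) (φ v)

set_option linter.unusedSectionVars false
set_option maxHeartbeats 1000000

section auxLemmas
variable [NormedAddCommGroup X] [NormedSpace ℝ X]

theorem aff_le_aff_iff {u v : X →L[ℝ] ℝ} {α β : ℝ} :
    aff u α ≤ aff (X := X) v β ↔ u = v ∧ α ≤ β := by
  constructor
  · intro h
    have hreal : ∀ x, u x + α ≤ v x + β := by
      intro x
      have := h x
      simpa only [aff, EReal.coe_le_coe_iff] using this
    have huv : u = v := by
      ext x
      by_contra hne
      rcases lt_or_gt_of_ne hne with hlt | hgt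
      · -- u x < v x : scale by large negative t
        have ht := hreal ((- (β - α + 1) / (v x - u x)) • x)
        simp only [map_smul, smul_eq_mul] at ht
        have hpos : 0 < v x - u x := by linarith
        rw [div_mul_eq_mul_div, div_mul_eq_mul_div] at ht
        have key : -(β - α + 1) * v x / (v x - u x) - -(β - α + 1) * u x / (v x - u x)
            = -(β - α + 1) := by field_simp; ring
        linarith
      · have ht := hreal (((β - α + 1) / (u x - v x)) • x)
        simp only [map_smul, smul_eq_mul] at ht
        have hpos : 0 < u x - v x := by linarith
        rw [div_mul_eq_mul_div, div_mul_eq_mul_div] at ht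
        have key : (β - α + 1) * u x / (u x - v x) - (β - α + 1) * v x / (u x - v x)
            = β - α + 1 := by field_simp
        linarith
    refine ⟨huv, ?_⟩
    have := hreal 0
    simp [huv] at this ⊢
    linarith [this]
  · rintro ⟨rfl, hab⟩ x
    simp only [aff, EReal.coe_le_coe_iff]
    linarith

theorem le_of_forall_scaled {a b K L : ℝ} (h : ∀ t : ℝ, 1 ≤ t → t * a + K ≤ t * b + L) : a ≤ b := by
  by_contra hab
  push_neg at hab
  have hd : 0 < a - b := by linarith
  set t := max 1 ((L - K + 1) / (a - b)) with ht
  have ht1 : 1 ≤ t := le_max_left _ _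
  have ht2 : (L - K + 1) / (a - b) ≤ t := le_max_right _ _
  have := h t ht1
  have h3 : L - K + 1 ≤ t * (a - b) := by
    rw [div_le_iff₀ hd] at ht2; linarith
  nlinarith


end auxLemmas

section isclfun
variable [NormedAddCommGroup X] [NormedSpace ℝ X]


theorem maxAffMem (u v : X →L[ℝ] ℝ) (α β : ℝ) :
    IsClFun X (fun x => ((max (u x + α) (v x + β) : ℝ) : EReal)) := by
  refine ⟨fun x => EReal.coe_ne_bot _, ⟨0, EReal.coe_ne_top _⟩, ?_, ?_⟩
  · exact (continuous_coe_real_ereal.comp (by continuity)).lowerSemicontinuous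
  · intro x y a b ha hb hab
    simp only [map_add, map_smul, smul_eq_mul]
    rw [← EReal.coe_mul, ← EReal.coe_mul, ← EReal.coe_add, EReal.coe_le_coe_iff]
    have h1 : a * u x + b * u y + α ≤ a * max (u x + α) (v x + β) + b * max (u y + α) (v y + β) := by
      have := mul_le_mul_of_nonneg_left (le_max_left (u x + α) (v x + β)) ha
      have := mul_le_mul_of_nonneg_left (le_max_left (u y + α) (v y + β)) hb
      have e : a * (u x + α) + b * (u y + α) = a * u x + b * u y + (a + b) * α := by ring
      rw [hab, one_mul] at e
      linarith
    have h2 : a * v x + b * v y + β ≤ a * max (u x + α) (v x + β) + b * max (u y + α) (v y + β) := by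
      have := mul_le_mul_of_nonneg_left (le_max_right (u x + α) (v x + β)) ha
      have := mul_le_mul_of_nonneg_left (le_max_right (u y + α) (v y + β)) hb
      have e : a * (v x + β) + b * (v y + β) = a * v x + b * v y + (a + b) * β := by ring
      rw [hab, one_mul] at e
      linarith
    exact max_le h1 h2

/-- Every value of an `IsClFun` dominated by a real is that real coe of its toReal. -/
theorem exists_real_of_le {f : X → EReal} (hf : IsClFun X f) {x : X} {r : ℝ}
    (h : f x ≤ (r : EReal)) : ∃ p : ℝ, f x = (p : EReal) ∧ p ≤ r := by
  have hne : f x ≠ ⊤ := fun ht => by rw [ht] at h; exact absurd h (by simp)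
  refine ⟨(f x).toReal, (EReal.coe_toReal hne (hf.1 x)).symm, ?_⟩
  rw [← EReal.coe_le_coe_iff, EReal.coe_toReal hne (hf.1 x)]; exact h

end isclfun

section sep
variable [NormedAddCommGroup X] [NormedSpace ℝ X]

theorem epi_closed {f : X → EReal} (hf : LowerSemicontinuous f) :
    IsClosed {p : X × ℝ | f p.1 ≤ (p.2 : EReal)} := by
  rw [← isOpen_compl_iff]
  rw [isOpen_iff_mem_nhds]
  rintro ⟨x, r⟩ hp
  simp only [mem_compl_iff, mem_setOf_eq, not_le] at hp
  obtain ⟨q, hq1, hq2⟩ := EReal.exists_between_coe_real hp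
  have hU : ∀ᶠ x' in nhds x, (q : EReal) < f x' := hf x q hq2
  have hq1' : r < q := by exact_mod_cast hq1
  obtain ⟨U, hUlt, hUo, hUx⟩ := eventually_nhds_iff.mp hU
  have : U ×ˢ Iio q ∈ nhds (x, r) := prod_mem_nhds (hUo.mem_nhds hUx) (Iio_mem_nhds hq1')
  refine Filter.mem_of_superset this ?_
  rintro ⟨x', r'⟩ ⟨hx', hr'⟩
  simp only [mem_compl_iff, mem_setOf_eq, not_le]
  calc ((r' : ℝ) : EReal) < (q : EReal) := by exact_mod_cast hr'
    _ < f x' := hUlt x' hx'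

theorem epi_convex {f : X → EReal} (hf : IsClFun X f) :
    Convex ℝ {p : X × ℝ | f p.1 ≤ (p.2 : EReal)} := by
  rintro ⟨x, r⟩ hx ⟨x', r'⟩ hx' a b ha hb hab
  simp only [mem_setOf_eq] at hx hx' ⊢
  obtain ⟨p, hp, hpr⟩ := exists_real_of_le hf hx
  obtain ⟨p', hp', hpr'⟩ := exists_real_of_le hf hx'
  have h1 := hf.2.2.2 x x' a b ha hb hab
  rw [hp, hp'] at h1
  have h2 : (a : EReal) * (p : EReal) + (b : EReal) * (p' : EReal)
      = ((a * p + b * p' : ℝ) : EReal) := by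
    rw [← EReal.coe_mul, ← EReal.coe_mul, ← EReal.coe_add]
  rw [h2] at h1
  refine le_trans h1 ?_
  rw [EReal.coe_le_coe_iff]
  have := mul_le_mul_of_nonneg_left hpr ha
  have := mul_le_mul_of_nonneg_left hpr' hb
  simp only [Prod.smul_mk, Prod.mk_add_mk, smul_eq_mul]
  linarith

theorem sep {f : X → EReal} (hf : IsClFun X f) {x₀ : X} {r₀ : ℝ} (hx₀ : (r₀ : EReal) < f x₀) :
    ∃ (v : X →L[ℝ] ℝ) (c d : ℝ), c ≤ 0 ∧
      (∀ x : X, ∀ r : ℝ, f x ≤ (r : EReal) → v x + c * r < d) ∧ d < v x₀ + c * r₀ := by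
  have hnot : (x₀, r₀) ∉ {p : X × ℝ | f p.1 ≤ (p.2 : EReal)} := by
    simp only [mem_setOf_eq, not_le]; exact hx₀
  obtain ⟨F, d, hFd, hd⟩ :=
    geometric_hahn_banach_closed_point (epi_convex hf) (epi_closed hf.2.2.1) hnot
  have hsplit : ∀ (x : X) (r : ℝ), F (x, r) = F (x, 0) + r * F (0, 1) := by
    intro x r
    have hxr : ((x, r) : X × ℝ) = (x, 0) + r • ((0 : X), (1 : ℝ)) := by
      simp [Prod.ext_iff]
    rw [hxr, map_add, map_smul, smul_eq_mul]
  set v : X →L[ℝ] ℝ := F.comp (ContinuousLinearMap.inl ℝ X ℝ) with hv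
  have hvx : ∀ x : X, v x = F (x, 0) := fun x => rfl
  set c : ℝ := F (0, 1) with hc
  have key : ∀ x : X, ∀ r : ℝ, f x ≤ (r : EReal) → v x + c * r < d := by
    intro x r hxr
    have := hFd (x, r) hxr
    rw [hsplit x r] at this
    rw [hvx]; linarith
  have hkey2 : d < v x₀ + c * r₀ := by
    have := hd
    rw [hsplit x₀ r₀] at this
    rw [hvx]; linarith
  refine ⟨v, c, d, ?_, key, hkey2⟩
  -- c ≤ 0 using properness
  by_contra hcpos
  push_neg at hcpos
  obtain ⟨x₁, hx₁⟩ := hf.2.1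
  have h₁ : f x₁ ≤ ((f x₁).toReal : EReal) := by
    rw [EReal.coe_toReal hx₁ (hf.1 x₁)]
  set t₁ := (f x₁).toReal
  set r := max t₁ ((d - v x₁) / c) with hr
  have hmem : f x₁ ≤ (r : EReal) := le_trans h₁ (by exact_mod_cast le_max_left _ _)
  have := key x₁ r hmem
  have h2 : d - v x₁ ≤ c * r := by
    have h3 : (d - v x₁) / c ≤ r := le_max_right _ _
    calc d - v x₁ = c * ((d - v x₁) / c) := by field_simp
      _ ≤ c * r := mul_le_mul_of_nonneg_left h3 (le_of_lt hcpos)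
  linarith

end sep

section main
variable [NormedAddCommGroup X] [NormedSpace ℝ X]

/-- From a separating functional with `c < 0` we get an affine minorant. -/
theorem minorant_of_sep {f : X → EReal} (hf : IsClFun X f) {v : X →L[ℝ] ℝ} {c d : ℝ}
    (hc : c < 0) (hsep : ∀ x : X, ∀ r : ℝ, f x ≤ (r : EReal) → v x + c * r < d) :
    aff ((-c)⁻¹ • v) (d / c) ≤ f := by
  intro x
  rcases eq_or_ne (f x) ⊤ with htop | htop
  · rw [htop]; exact le_top
  · have hle : f x ≤ (((f x).toReal : ℝ) : EReal) := by
      rw [EReal.coe_toReal htop (hf.1 x)]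
    set t := (f x).toReal
    have h := hsep x t hle
    have hx : ((-c)⁻¹ • v) x + d / c ≤ t := by
      simp only [ContinuousLinearMap.smul_apply, smul_eq_mul]
      have hcne : c ≠ 0 := ne_of_lt hc
      have h1 : (-c) ≠ 0 := neg_ne_zero.2 hcne
      have this2 : (-c)⁻¹ * v x + d / c = (v x - d) / (-c) := by
        rw [eq_div_iff h1, add_mul]
        have h2 : (-c)⁻¹ * v x * -c = v x := by
          rw [mul_comm ((-c)⁻¹) (v x), mul_assoc, inv_mul_cancel₀ h1, mul_one]
        have h3 : d / c * -c = -d := by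
          rw [div_mul_eq_mul_div, mul_neg, neg_div, mul_div_assoc, div_self hcne, mul_one]
        rw [h2, h3]; ring
      rw [this2, div_le_iff₀ (by linarith : (0:ℝ) < -c)]
      nlinarith
    calc aff ((-c)⁻¹ • v) (d / c) x ≤ ((t : ℝ) : EReal) := by
          simp only [aff, EReal.coe_le_coe_iff]; exact hx
      _ = f x := EReal.coe_toReal htop (hf.1 x)

theorem affine_of_chain {f : X → EReal} (hf : IsClFun X f)
    (hchain : ∀ (u₁ u₂ : X →L[ℝ] ℝ) (α₁ α₂ : ℝ), aff u₁ α₁ ≤ f → aff u₂ α₂ ≤ f → u₁ = u₂) :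
    ∃ u β, f = aff u β := by
  classical
  obtain ⟨x₁, hx₁⟩ := hf.2.1
  have hx₁b := hf.1 x₁
  set t₁ := (f x₁).toReal with ht₁
  have hfx₁ : f x₁ = (t₁ : EReal) := (EReal.coe_toReal hx₁ hx₁b).symm
  -- Step 1 : existence of an affine minorant
  have hlt₁ : ((t₁ - 1 : ℝ) : EReal) < f x₁ := by
    rw [hfx₁, EReal.coe_lt_coe_iff]; linarith
  obtain ⟨v, c, d, hc0, hsep, hd⟩ := sep hf hlt₁
  have hcneg : c < 0 := by
    rcases lt_or_eq_of_le hc0 with h | h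
    · exact h
    · exfalso
      have h1 := hsep x₁ t₁ (le_of_eq hfx₁)
      rw [h] at h1 hd
      simp only [zero_mul, add_zero] at h1 hd
      linarith
  set u₀ : X →L[ℝ] ℝ := (-c)⁻¹ • v with hu₀
  have hmin₀ : aff u₀ (d / c) ≤ f := minorant_of_sep hf hcneg hsep
  -- Step 2 : the sup of admissible constants
  set S : Set ℝ := {α | aff u₀ α ≤ f} with hS
  have hSne : S.Nonempty := ⟨d / c, hmin₀⟩
  have hSbdd : BddAbove S := by
    refine ⟨t₁ - u₀ x₁, fun α hα => ?_⟩
    have := hα x₁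
    rw [hfx₁] at this
    simp only [aff, EReal.coe_le_coe_iff] at this
    linarith
  set s := sSup S with hs
  have hmins : aff u₀ s ≤ f := by
    intro x
    rcases eq_or_ne (f x) ⊤ with htop | htop
    · rw [htop]; exact le_top
    · have hfx : f x = ((f x).toReal : EReal) := (EReal.coe_toReal htop (hf.1 x)).symm
      rw [hfx]
      simp only [aff, EReal.coe_le_coe_iff]
      have : u₀ x + s = u₀ x + sSup S := rfl
      have hub : ∀ α ∈ S, α ≤ (f x).toReal - u₀ x := by
        intro α hα
        have := hα x
        rw [hfx] at this
        simp only [aff, EReal.coe_le_coe_iff] at this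
        linarith
      have := csSup_le hSne hub
      linarith
  -- Step 3 : f equals this affine function
  refine ⟨u₀, s, ?_⟩
  funext x₀
  by_contra hne
  have hlt : ((u₀ x₀ + s : ℝ) : EReal) < f x₀ :=
    lt_of_le_of_ne (hmins x₀) (fun h => hne (h.symm ▸ rfl))
  obtain ⟨v', c', d', hc0', hsep', hd'⟩ := sep hf hlt
  rcases lt_or_eq_of_le hc0' with hcneg' | hczero
  · -- c' < 0 : second affine minorant forced to have slope u₀
    have hmin' : aff ((-c')⁻¹ • v') (d' / c') ≤ f := minorant_of_sep hf hcneg' hsep'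
    have heq := hchain _ _ _ _ hmin' hmins
    rw [heq] at hmin'
    have hdc'S : d' / c' ∈ S := hmin'
    have hle' : d' / c' ≤ s := le_csSup hSbdd hdc'S
    -- but hd' : d' < v' x₀ + c' * (u₀ x₀ + s)  gives  d'/c' > s
    have hval : ((-c')⁻¹ • v') x₀ = u₀ x₀ := by rw [heq]
    simp only [ContinuousLinearMap.smul_apply, smul_eq_mul] at hval
    -- from hd' : d' < v' x₀ + c' * (u₀ x₀ + s); v' x₀ = (-c') * ((-c')⁻¹ v' x₀) = -c' * u₀ x₀
    have hvx : v' x₀ = (-c') * u₀ x₀ := by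
      have hcne : (-c') ≠ 0 := by intro h; apply absurd hcneg'; rw [neg_eq_zero] at h; simp [h]
      field_simp at hval
      rw [← hval, neg_mul_neg, mul_div_assoc', mul_comm, mul_div_assoc, div_self (ne_of_lt hcneg'), mul_one]
    rw [hvx] at hd'
    have : s < d' / c' := by
      rw [lt_div_iff_of_neg hcneg']
      nlinarith
    linarith
  · -- c' = 0 : tilt the existing minorant to get a different slope
    exfalso
    rw [hczero] at hsep' hd'
    simp only [zero_mul, add_zero] at hsep' hd'
    -- hsep' : ∀ x r, f x ≤ r → v' x < d';  hd' : d' < v' x₀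
    have htilt : aff (u₀ + v') (s - d') ≤ f := by
      intro x
      rcases eq_or_ne (f x) ⊤ with htop | htop
      · rw [htop]; exact le_top
      · have hfx : f x = ((f x).toReal : EReal) := (EReal.coe_toReal htop (hf.1 x)).symm
        have hvd := hsep' x (f x).toReal (le_of_eq hfx)
        have hus := hmins x
        rw [hfx] at hus ⊢
        simp only [aff, EReal.coe_le_coe_iff, ContinuousLinearMap.add_apply] at hus ⊢
        linarith
    have heq := hchain _ _ _ _ htilt hmins
    have hv0 : v' = 0 := by
      have : u₀ + v' - u₀ = u₀ - u₀ := by rw [heq]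
      simpa using this
    have h1 := hsep' x₁ t₁ (le_of_eq hfx₁)
    rw [hv0] at h1 hd'
    simp at h1 hd'
    linarith

end main


section mainproof
variable [NormedAddCommGroup X] [NormedSpace ℝ X]

theorem affCl_val (u : X →L[ℝ] ℝ) (α : ℝ) : (affCl u α).1 = aff u α := rfl

end mainproof

theorem linear_part_bijective_and_quasiconvex
    [NormedAddCommGroup X] [NormedSpace ℝ X] [CompleteSpace X]
    (T : Cl X → Cl X) (hT : FullyOrderPreserving T)
    (y : (X →L[ℝ] ℝ) → (X →L[ℝ] ℝ)) (γ : (X →L[ℝ] ℝ) → ℝ → ℝ)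
    (hrep : ∀ (u : X →L[ℝ] ℝ) (α : ℝ), (T (affCl u α)).1 = aff (y u) (γ u α)) :
    Function.Bijective y ∧ (∀ x : X, QCvx (fun u => y u x)) ∧
      ∀ g : (X →L[ℝ] ℝ) → (X →L[ℝ] ℝ),
        Function.LeftInverse g y → Function.RightInverse g y →
          ∀ x : X, QCvx (fun u => g u x) := by
  obtain ⟨hsurj, hord⟩ := hT
  -- injectivity of y
  have hyinj : Function.Injective y := by
    intro u v huv
    rcases le_total (γ u 0) (γ v 0) with h | h
    · have h1 : (T (affCl u 0)).1 ≤ (T (affCl v 0)).1 := by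
        rw [hrep, hrep, ← huv]; exact aff_le_aff_iff.2 ⟨rfl, h⟩
      have h2 := (hord _ _).2 h1
      rw [affCl_val, affCl_val] at h2
      exact (aff_le_aff_iff.1 h2).1
    · have h1 : (T (affCl v 0)).1 ≤ (T (affCl u 0)).1 := by
        rw [hrep, hrep, ← huv]; exact aff_le_aff_iff.2 ⟨rfl, h⟩
      have h2 := (hord _ _).2 h1
      rw [affCl_val, affCl_val] at h2
      exact ((aff_le_aff_iff.1 h2).1).symm
  -- surjectivity of y
  have hysurj : Function.Surjective y := by
    intro w
    obtain ⟨fh, hfh⟩ := hsurj (affCl w 0)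
    have hslope : ∀ (u' : X →L[ℝ] ℝ) (α' : ℝ), aff u' α' ≤ fh.1 → y u' = w := by
      intro u' α' h1
      have e1 : (T (affCl u' α')).1 ≤ (T fh).1 := (hord _ _).1 h1
      rw [hrep, hfh, affCl_val] at e1
      exact (aff_le_aff_iff.1 e1).1
    have hchain : ∀ (u₁ u₂ : X →L[ℝ] ℝ) (α₁ α₂ : ℝ),
        aff u₁ α₁ ≤ fh.1 → aff u₂ α₂ ≤ fh.1 → u₁ = u₂ := by
      intro u₁ u₂ α₁ α₂ h1 h2
      exact hyinj ((hslope u₁ α₁ h1).trans (hslope u₂ α₂ h2).symm)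
    obtain ⟨u, β, hu⟩ := affine_of_chain fh.2 hchain
    have hfa : fh = affCl u β := Subtype.ext hu
    rw [hfa] at hfh
    have he : aff (y u) (γ u β) = aff (X := X) w 0 := by
      rw [← hrep, hfh, affCl_val]
    exact ⟨u, (aff_le_aff_iff.1 (le_of_eq he)).1⟩
  -- γ is unbounded below in its second argument
  have hgamma : ∀ (z : X →L[ℝ] ℝ) (c : ℝ), ∃ β : ℝ, γ z β ≤ c := by
    intro z c
    by_contra hcon
    push_neg at hcon
    obtain ⟨fh, hfh⟩ := hsurj (affCl (y z) c)
    have hβ : ∀ β : ℝ, fh.1 ≤ aff z β := by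
      intro β
      have h1 : (T fh).1 ≤ (T (affCl z β)).1 := by
        rw [hrep, hfh, affCl_val]
        exact aff_le_aff_iff.2 ⟨rfl, le_of_lt (hcon β)⟩
      exact (hord _ _).2 h1
    have h0 : ∀ β : ℝ, fh.1 0 ≤ ((z 0 + β : ℝ) : EReal) := fun β => hβ β 0
    have hbot : fh.1 0 = ⊥ := by
      have hnb := fh.2.1 0
      rcases eq_or_ne (fh.1 0) ⊤ with ht | ht
      · exfalso
        have := h0 0
        rw [ht] at this
        exact absurd this (by simp)
      · exfalso
        obtain ⟨r, hr⟩ : ∃ r : ℝ, fh.1 0 = (r : EReal) :=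
          ⟨(fh.1 0).toReal, (EReal.coe_toReal ht hnb).symm⟩
        have := h0 (r - z 0 - 1)
        rw [hr, EReal.coe_le_coe_iff] at this
        linarith
    exact absurd hbot (fh.2.1 0)
  refine ⟨⟨hyinj, hysurj⟩, ?_, ?_⟩
  · -- quasiconvexity of u ↦ y u x
    intro x u v s hs0 hs1
    set w : X →L[ℝ] ℝ := s • u + (1 - s) • v with hw
    set A := γ u 0 with hA
    set B := γ v 0 with hB
    obtain ⟨gh, hgh⟩ := hsurj ⟨_, maxAffMem (y u) (y v) A B⟩
    have h1 : aff u 0 ≤ gh.1 := by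
      have e1 : (T (affCl u 0)).1 ≤ (T gh).1 := by
        rw [hrep, hgh]
        intro x'
        show (((y u) x' + γ u 0 : ℝ) : EReal) ≤ ((max ((y u) x' + A) ((y v) x' + B) : ℝ) : EReal)
        rw [EReal.coe_le_coe_iff, hA]
        exact le_max_left _ _
      exact (hord _ _).2 e1
    have h2 : aff v 0 ≤ gh.1 := by
      have e1 : (T (affCl v 0)).1 ≤ (T gh).1 := by
        rw [hrep, hgh]
        intro x'
        show (((y v) x' + γ v 0 : ℝ) : EReal) ≤ ((max ((y u) x' + A) ((y v) x' + B) : ℝ) : EReal)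
        rw [EReal.coe_le_coe_iff, hB]
        exact le_max_right _ _
      exact (hord _ _).2 e1
    have h3 : aff w 0 ≤ gh.1 := by
      intro x'
      have hwx : w x' = s * u x' + (1 - s) * v x' := by
        simp [hw, ContinuousLinearMap.add_apply, ContinuousLinearMap.smul_apply, smul_eq_mul]
      rcases le_total (u x') (v x') with hc | hc
      · refine le_trans ?_ (h2 x')
        simp only [aff, EReal.coe_le_coe_iff, hwx]
        nlinarith
      · refine le_trans ?_ (h1 x')
        simp only [aff, EReal.coe_le_coe_iff, hwx]
        nlinarith
    have h4 : (T (affCl w 0)).1 ≤ (T gh).1 := (hord _ _).1 h3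
    rw [hrep, hgh] at h4
    have h5 : ∀ t : ℝ, 1 ≤ t →
        t * y w x + γ w 0 ≤ t * max (y u x) (y v x) + max A B := by
      intro t ht
      have h7 : (((y w) (t • x) + γ w 0 : ℝ) : EReal)
          ≤ ((max ((y u) (t • x) + A) ((y v) (t • x) + B) : ℝ) : EReal) := h4 (t • x)
      rw [EReal.coe_le_coe_iff] at h7
      simp only [map_smul, smul_eq_mul] at h7
      have hm1 : t * y u x ≤ t * max (y u x) (y v x) :=
        mul_le_mul_of_nonneg_left (le_max_left _ _) (by linarith)
      have hm2 : t * y v x ≤ t * max (y u x) (y v x) :=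
        mul_le_mul_of_nonneg_left (le_max_right _ _) (by linarith)
      have hm3 : A ≤ max A B := le_max_left _ _
      have hm4 : B ≤ max A B := le_max_right _ _
      rcases max_cases (t * ((y u) x) + A) (t * ((y v) x) + B) with ⟨hm, _⟩ | ⟨hm, _⟩ <;>
        rw [hm] at h7 <;> linarith
    exact le_of_forall_scaled h5
  · -- quasiconvexity of u ↦ g u x for an inverse g
    intro g hgl hgr x u₁ u₂ s hs0 hs1
    set v₁ := g u₁ with hv₁
    set v₂ := g u₂ with hv₂
    have hyv₁ : y v₁ = u₁ := hgr u₁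
    have hyv₂ : y v₂ = u₂ := hgr u₂
    set w' : X →L[ℝ] ℝ := s • u₁ + (1 - s) • u₂ with hw'
    set z := g w' with hz
    have hyz : y z = w' := hgr w'
    set A₁ := γ v₁ 0 with hA₁
    set A₂ := γ v₂ 0 with hA₂
    have hmem : IsClFun X (fun x' : X => ((max (v₁ x' + 0) (v₂ x' + 0) : ℝ) : EReal)) :=
      maxAffMem v₁ v₂ 0 0
    have h1 : aff u₁ A₁ ≤ (T ⟨_, hmem⟩).1 := by
      have e1 : (T (affCl v₁ 0)).1 ≤ (T ⟨_, hmem⟩).1 := by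
        refine (hord _ _).1 ?_
        intro x'
        show ((v₁ x' + 0 : ℝ) : EReal) ≤ ((max (v₁ x' + 0) (v₂ x' + 0) : ℝ) : EReal)
        rw [EReal.coe_le_coe_iff]
        exact le_max_left _ _
      rw [hrep, hyv₁] at e1
      exact e1
    have h2 : aff u₂ A₂ ≤ (T ⟨_, hmem⟩).1 := by
      have e1 : (T (affCl v₂ 0)).1 ≤ (T ⟨_, hmem⟩).1 := by
        refine (hord _ _).1 ?_
        intro x'
        show ((v₂ x' + 0 : ℝ) : EReal) ≤ ((max (v₁ x' + 0) (v₂ x' + 0) : ℝ) : EReal)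
        rw [EReal.coe_le_coe_iff]
        exact le_max_right _ _
      rw [hrep, hyv₂] at e1
      exact e1
    obtain ⟨β, hβ⟩ := hgamma z (s * A₁ + (1 - s) * A₂)
    have h3 : (T (affCl z β)).1 ≤ (T ⟨_, hmem⟩).1 := by
      rw [hrep, hyz]
      intro x'
      have hwx : w' x' = s * u₁ x' + (1 - s) * u₂ x' := by
        simp [hw', ContinuousLinearMap.add_apply, ContinuousLinearMap.smul_apply, smul_eq_mul]
      rcases le_total (u₁ x' + A₁) (u₂ x' + A₂) with hc | hc
      · refine le_trans ?_ (h2 x')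
        simp only [aff, EReal.coe_le_coe_iff, hwx]
        nlinarith
      · refine le_trans ?_ (h1 x')
        simp only [aff, EReal.coe_le_coe_iff, hwx]
        nlinarith
    have h4 : aff z β ≤ fun x' : X => ((max (v₁ x' + 0) (v₂ x' + 0) : ℝ) : EReal) :=
      (hord _ _).2 h3
    have h5 : ∀ t : ℝ, 1 ≤ t → t * z x + β ≤ t * max (v₁ x) (v₂ x) + 0 := by
      intro t ht
      have h7 : ((z (t • x) + β : ℝ) : EReal)
          ≤ ((max (v₁ (t • x) + 0) (v₂ (t • x) + 0) : ℝ) : EReal) := h4 (t • x)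
      rw [EReal.coe_le_coe_iff] at h7
      simp only [map_smul, smul_eq_mul, add_zero] at h7
      have hm1 : t * v₁ x ≤ t * max (v₁ x) (v₂ x) :=
        mul_le_mul_of_nonneg_left (le_max_left _ _) (by linarith)
      have hm2 : t * v₂ x ≤ t * max (v₁ x) (v₂ x) :=
        mul_le_mul_of_nonneg_left (le_max_right _ _) (by linarith)
      rcases max_cases (t * (v₁ x)) (t * (v₂ x)) with ⟨hm, _⟩ | ⟨hm, _⟩ <;>
        rw [hm] at h7 <;> linarith
    exact le_of_forall_scaled h5
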